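/- Every minimal missing face of the substitution complex K(K_1,...,K_m) is either a minimal missing face of one of the K_i, or a set {j_1,...,j_k} with j_l a vertex of K_{i_l} for l=1,...,k, where {i_1,...,i_k} is a minimal missing face of K; and conversely all such sets are minimal missing faces of K(K_1,...,K_m). -/

import Mathlib

/-- An (abstract) simplicial complex on the vertex type `V`, given as a
downward closed collection of finite subsets of `V`. -/
def IsCx {V : Type*} (X : Set (Finset V)) : Prop :=
  ∀ ⦃s⦄, s ∈ X → ∀ ⦃t⦄, t ⊆ s → t ∈ X

/-- The vertex set of a collection of faces. -/
def vertSC {V : Type*} (X : Set (Finset V)) : Set V := {v | {v} ∈ X}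

/-- The support (union of all faces) of a collection of faces. -/
def suppSC {V : Type*} (X : Set (Finset V)) : Set V := ⋃ s ∈ X, (s : Set V)

/-- The join of two simplicial complexes (on disjoint vertex sets). -/
def joinSC {V : Type*} [DecidableEq V] (A B : Set (Finset V)) : Set (Finset V) :=
  {s | ∃ a ∈ A, ∃ b ∈ B, s = a ∪ b}

/-- `Y` is a subcomplex of `X` which is full: every face of `X` all of whose vertices
are vertices of `Y` is a face of `Y`. -/
def IsFullSub {V : Type*} (Y X : Set (Finset V)) : Prop :=
  Y ⊆ X ∧ ∀ s ∈ X, (↑s : Set V) ⊆ vertSC Y → s ∈ Y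

/-- The faces of the polyhedral join contributed by the simplex `σ`:
joins of a face of `K i` for `i ∈ σ` with a face of `L i` for `i ∉ σ`. -/
def pjFace {V : Type*} [DecidableEq V] {m : ℕ} (K L : Fin m → Set (Finset V))
    (σ : Finset (Fin m)) : Set (Finset V) :=
  {s | ∃ τ : Fin m → Finset V,
    (∀ i, τ i ∈ (if i ∈ σ then K i else L i)) ∧ s = Finset.univ.biUnion τ}

/-- The polyhedral join product `(K,L)^{*M}`. -/
def polyJoin {V : Type*} [DecidableEq V] {m : ℕ} (M : Set (Finset (Fin m)))
    (K L : Fin m → Set (Finset V)) : Set (Finset V) :=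
  ⋃ σ ∈ M, pjFace K L σ

/-- The link of a vertex. -/
def linkSC {V : Type*} [DecidableEq V] (X : Set (Finset V)) (v : V) : Set (Finset V) :=
  {τ | v ∉ τ ∧ τ ∈ X ∧ insert v τ ∈ X}

/-- The deletion (restriction) of a vertex. -/
def delSC {V : Type*} (X : Set (Finset V)) (v : V) : Set (Finset V) :=
  {τ | τ ∈ X ∧ v ∉ τ}

/-- The substitution complex `K(K_1,…,K_m)`: the polyhedral join product with
pairs `(K_i, ∅)`. -/
def substSC {V : Type*} [DecidableEq V] {m : ℕ} (M : Set (Finset (Fin m)))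
    (Ks : Fin m → Set (Finset V)) : Set (Finset V) :=
  polyJoin M Ks (fun _ => {(∅ : Finset V)})

/-- `ω` is a minimal missing face of `X` (with vertex set `S`). -/
def IsMMF {V : Type*} (X : Set (Finset V)) (S : Set V) (ω : Finset V) : Prop :=
  (↑ω : Set V) ⊆ S ∧ ω ∉ X ∧ ∀ t ⊂ ω, t ∈ X

/-- A simplicial complex is flag if every finite set of vertices which are pairwise
connected by edges is a face. -/
def IsFlag {V : Type*} [DecidableEq V] (X : Set (Finset V)) : Prop :=
  IsCx X ∧ ∀ s : Finset V, (↑s : Set V) ⊆ vertSC X →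
    (∀ u ∈ s, ∀ w ∈ s, u ≠ w → ({u, w} : Finset V) ∈ X) → s ∈ X

section Helpers

variable {V : Type} [DecidableEq V] {m : ℕ}

open Classical in
/-- The part of `s` supported on the `i`-th factor. -/
noncomputable def partF (Ks : Fin m → Set (Finset V)) (s : Finset V) (i : Fin m) : Finset V :=
  s.filter (fun v => v ∈ suppSC (Ks i))

open Classical in
/-- The set of factors on which `s` has nonempty part. -/
noncomputable def typeF (Ks : Fin m → Set (Finset V)) (s : Finset V) : Finset (Fin m) :=
  Finset.univ.filter (fun i => partF Ks s i ≠ ∅)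

lemma mem_partF {Ks : Fin m → Set (Finset V)} {s : Finset V} {i : Fin m} {v : V} :
    v ∈ partF Ks s i ↔ v ∈ s ∧ v ∈ suppSC (Ks i) := by
  classical
  simp [partF]

lemma mem_typeF {Ks : Fin m → Set (Finset V)} {s : Finset V} {i : Fin m} :
    i ∈ typeF Ks s ↔ partF Ks s i ≠ ∅ := by
  classical
  simp [typeF]

lemma partF_subset {Ks : Fin m → Set (Finset V)} {s : Finset V} {i : Fin m} :
    partF Ks s i ⊆ s := fun v hv => (mem_partF.1 hv).1

lemma partF_mono {Ks : Fin m → Set (Finset V)} {s t : Finset V} (h : t ⊆ s) {i : Fin m} :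
    partF Ks t i ⊆ partF Ks s i := fun v hv =>
  mem_partF.2 ⟨h (mem_partF.1 hv).1, (mem_partF.1 hv).2⟩

lemma face_subset_supp {X : Set (Finset V)} {τ : Finset V} (h : τ ∈ X) :
    (↑τ : Set V) ⊆ suppSC X := fun v hv => Set.mem_biUnion h hv

lemma vert_subset_supp {X : Set (Finset V)} {v : V} (h : v ∈ vertSC X) :
    v ∈ suppSC X := Set.mem_biUnion h (by simp)

lemma supp_unique {Ks : Fin m → Set (Finset V)}
    (hdisj : ∀ i j, i ≠ j → Disjoint (suppSC (Ks i)) (suppSC (Ks j)))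
    {i j : Fin m} {v : V} (hi : v ∈ suppSC (Ks i)) (hj : v ∈ suppSC (Ks j)) : i = j := by
  by_contra h
  exact (hdisj i j h).ne_of_mem hi hj rfl

lemma eq_biUnion_partF {Ks : Fin m → Set (Finset V)} {s : Finset V}
    (hs : (↑s : Set V) ⊆ ⋃ i, suppSC (Ks i)) :
    s = Finset.univ.biUnion (partF Ks s) := by
  ext v
  simp only [Finset.mem_biUnion, Finset.mem_univ, true_and, mem_partF]
  constructor
  · intro hv
    obtain ⟨i, hi⟩ := Set.mem_iUnion.1 (hs hv)
    exact ⟨i, hv, hi⟩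
  · rintro ⟨i, hv, -⟩
    exact hv

/-- Key membership criterion for the substitution complex. -/
lemma mem_substSC_iff {K : Set (Finset (Fin m))} {Ks : Fin m → Set (Finset V)}
    (hK : IsCx K) (h0 : ∀ i, (∅ : Finset V) ∈ Ks i)
    (hdisj : ∀ i j, i ≠ j → Disjoint (suppSC (Ks i)) (suppSC (Ks j)))
    {s : Finset V} (hs : (↑s : Set V) ⊆ ⋃ i, suppSC (Ks i)) :
    s ∈ substSC K Ks ↔ (∀ i, partF Ks s i ∈ Ks i) ∧ typeF Ks s ∈ K := by
  constructor
  · intro hmem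
    obtain ⟨σ, hσK, τ, hτ, hsτ⟩ := Set.mem_iUnion₂.1 hmem
    have hτsupp : ∀ i, (↑(τ i) : Set V) ⊆ suppSC (Ks i) := by
      intro i
      by_cases hi : i ∈ σ
      · exact face_subset_supp (by simpa [hi] using hτ i)
      · have : τ i = ∅ := by simpa [hi] using hτ i
        simp [this]
    have hpart : ∀ i, partF Ks s i = τ i := by
      intro i
      apply Finset.Subset.antisymm
      · intro v hv
        obtain ⟨hvs, hvi⟩ := mem_partF.1 hv
        rw [hsτ] at hvs
        obtain ⟨j, -, hvj⟩ := Finset.mem_biUnion.1 hvs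
        have := supp_unique hdisj hvi (hτsupp j hvj)
        subst this
        exact hvj
      · intro v hv
        refine mem_partF.2 ⟨?_, hτsupp i hv⟩
        rw [hsτ]
        exact Finset.mem_biUnion.2 ⟨i, Finset.mem_univ i, hv⟩
    constructor
    · intro i
      rw [hpart]
      by_cases hi : i ∈ σ
      · simpa [hi] using hτ i
      · have : τ i = ∅ := by simpa [hi] using hτ i
        rw [this]; exact h0 i
    · refine hK hσK ?_
      intro i hi
      have hne := mem_typeF.1 hi
      rw [hpart] at hne
      by_contra hiσ
      exact hne (by simpa [hiσ] using hτ i)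
  · rintro ⟨hparts, htype⟩
    refine Set.mem_iUnion₂.2 ⟨typeF Ks s, htype, partF Ks s, ?_, eq_biUnion_partF hs⟩
    intro i
    by_cases hi : i ∈ typeF Ks s
    · simpa [hi] using hparts i
    · have : partF Ks s i = ∅ := by
        by_contra h
        exact hi (mem_typeF.2 h)
      simp [hi, this]

end Helpers
section Helpers2
set_option linter.unusedSectionVars false
set_option linter.unusedVariables false

variable {V : Type} [DecidableEq V] {m : ℕ} {Ks : Fin m → Set (Finset V)}

lemma partF_of_subset_supp
    (hdisj : ∀ i j, i ≠ j → Disjoint (suppSC (Ks i)) (suppSC (Ks j)))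
    {s : Finset V} {i : Fin m} (hs : (↑s : Set V) ⊆ suppSC (Ks i)) :
    partF Ks s i = s ∧ ∀ j, j ≠ i → partF Ks s j = ∅ := by
  constructor
  · apply Finset.Subset.antisymm partF_subset
    intro v hv
    exact mem_partF.2 ⟨hv, hs hv⟩
  · intro j hj
    rw [Finset.eq_empty_iff_forall_notMem]
    intro v hv
    obtain ⟨hvs, hvj⟩ := mem_partF.1 hv
    exact hj (supp_unique hdisj hvj (hs hvs))

lemma partF_image
    (hdisj : ∀ i j, i ≠ j → Disjoint (suppSC (Ks i)) (suppSC (Ks j)))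
    {σ : Finset (Fin m)} {f : Fin m → V} (hf : ∀ i ∈ σ, f i ∈ suppSC (Ks i)) (i : Fin m) :
    partF Ks (σ.image f) i = if i ∈ σ then {f i} else ∅ := by
  ext v
  rw [mem_partF]
  simp only [Finset.mem_image]
  constructor
  · rintro ⟨⟨j, hjσ, rfl⟩, hvi⟩
    have := supp_unique hdisj (hf j hjσ) hvi
    subst this
    simp [hjσ]
  · intro hv
    by_cases hi : i ∈ σ
    · simp only [hi, if_true, Finset.mem_singleton] at hv
      subst hv
      exact ⟨⟨i, hi, rfl⟩, hf i hi⟩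
    · simp [hi] at hv

lemma typeF_image
    (hdisj : ∀ i j, i ≠ j → Disjoint (suppSC (Ks i)) (suppSC (Ks j)))
    {σ : Finset (Fin m)} {f : Fin m → V} (hf : ∀ i ∈ σ, f i ∈ suppSC (Ks i)) :
    typeF Ks (σ.image f) = σ := by
  ext i
  rw [mem_typeF, partF_image hdisj hf]
  by_cases hi : i ∈ σ <;> simp [hi]

end Helpers2
section Helpers3
set_option linter.unusedSectionVars false
set_option linter.unusedVariables false

variable {V : Type} [DecidableEq V] {m : ℕ} {Ks : Fin m → Set (Finset V)}

lemma partF_empty (i : Fin m) : partF Ks (∅ : Finset V) i = ∅ := by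
  classical
  simp [partF]

lemma typeF_empty : typeF Ks (∅ : Finset V) = ∅ := by
  classical
  simp [typeF, partF_empty]

lemma partF_erase_of_not_mem_supp {s : Finset V} {v : V} {i : Fin m}
    (hv : v ∉ suppSC (Ks i)) : partF Ks (s.erase v) i = partF Ks s i := by
  ext w
  simp only [mem_partF, Finset.mem_erase]
  constructor
  · rintro ⟨⟨-, hw⟩, hwi⟩; exact ⟨hw, hwi⟩
  · rintro ⟨hw, hwi⟩; exact ⟨⟨fun h => hv (h ▸ hwi), hw⟩, hwi⟩

lemma partF_erase (s : Finset V) (v : V) (i : Fin m) :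
    partF Ks (s.erase v) i = (partF Ks s i).erase v := by
  ext w
  simp only [mem_partF, Finset.mem_erase]
  tauto

end Helpers3
/-- The minimal missing faces of the substitution complex `K(K_1,…,K_m)`
are exactly: the minimal missing faces of the `K_i`, together with the sets
`{j_1,…,j_k}` with `j_l` a vertex of `K_{i_l}`, where `{i_1,…,i_k}` ranges over the
minimal missing faces of `K`. -/
theorem substSC_minimal_missing_faces {V : Type} [DecidableEq V] {m : ℕ}
    (K : Set (Finset (Fin m))) (Ks : Fin m → Set (Finset V))
    (hK : IsCx K) (hKe : (∅ : Finset (Fin m)) ∈ K) (hKv : ∀ i, ({i} : Finset (Fin m)) ∈ K)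
    (hKs : ∀ i, IsCx (Ks i)) (h0 : ∀ i, (∅ : Finset V) ∈ Ks i)
    (hne : ∀ i, (vertSC (Ks i)).Nonempty)
    (hdisj : ∀ i j, i ≠ j → Disjoint (suppSC (Ks i)) (suppSC (Ks j)))
    (ω : Finset V) :
    IsMMF (substSC K Ks) (⋃ i, vertSC (Ks i)) ω ↔
      ((∃ i, IsMMF (Ks i) (vertSC (Ks i)) ω) ∨
        (∃ σ : Finset (Fin m), IsMMF K Set.univ σ ∧
          ∃ f : Fin m → V, (∀ i ∈ σ, f i ∈ vertSC (Ks i)) ∧ ω = σ.image f)) := by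
  have memiff := fun {s : Finset V} (hs : (↑s : Set V) ⊆ ⋃ i, suppSC (Ks i)) =>
    mem_substSC_iff (Ks := Ks) hK h0 hdisj hs
  constructor
  · rintro ⟨hsub, hnot, hmin⟩
    have hsupp : (↑ω : Set V) ⊆ ⋃ i, suppSC (Ks i) := by
      intro v hv
      obtain ⟨i, hvi⟩ := Set.mem_iUnion.1 (hsub hv)
      exact Set.mem_iUnion.2 ⟨i, vert_subset_supp hvi⟩
    have hvert : ∀ v ∈ ω, ∀ i, v ∈ suppSC (Ks i) → v ∈ vertSC (Ks i) := by
      intro v hv i hvi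
      obtain ⟨j, hvj⟩ := Set.mem_iUnion.1 (hsub hv)
      have : j = i := supp_unique hdisj (vert_subset_supp hvj) hvi
      subst this; exact hvj
    have hωne : ω ≠ ∅ := by
      rintro rfl
      exact hnot ((memiff (by simp)).2
        ⟨fun i => by rw [partF_empty]; exact h0 i, by rw [typeF_empty]; exact hKe⟩)
    by_cases hone : ∃ i, (↑ω : Set V) ⊆ suppSC (Ks i)
    · -- Case 1: ω lives in a single factor; it is an MMF of that factor.
      obtain ⟨i, hi⟩ := hone
      obtain ⟨hpi, hpj⟩ := partF_of_subset_supp hdisj (s := ω) hi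
      refine Or.inl ⟨i, fun v hv => hvert v hv i (hi hv), ?_, ?_⟩
      · intro h
        apply hnot
        refine (memiff hsupp).2 ⟨?_, ?_⟩
        · intro j
          by_cases hj : j = i
          · subst hj; rw [hpi]; exact h
          · rw [hpj j hj]; exact h0 j
        · refine hK (hKv i) ?_
          intro j hj
          have := mem_typeF.1 hj
          by_contra hji
          simp only [Finset.mem_singleton] at hji
          exact this (hpj j hji)
      · intro t ht
        have htsupp : (↑t : Set V) ⊆ suppSC (Ks i) :=
          fun v hv => hi (ht.1 hv)
        have htmem := hmin t ht
        have := ((memiff (fun v hv => Set.mem_iUnion.2 ⟨i, htsupp hv⟩)).1 htmem).1 i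
        rwa [(partF_of_subset_supp hdisj htsupp).1] at this
    · -- Case 2: ω meets at least two factors.
      push_neg at hone
      -- get two distinct indices in the type of ω
      obtain ⟨v0, hv0⟩ := Finset.nonempty_iff_ne_empty.2 hωne
      obtain ⟨i0, hvi0⟩ := Set.mem_iUnion.1 (hsupp hv0)
      obtain ⟨v1, hv1, hv1n⟩ := Set.not_subset.1 (hone i0)
      obtain ⟨i1, hvi1⟩ := Set.mem_iUnion.1 (hsupp hv1)
      have hii : i1 ≠ i0 := fun h => hv1n (h ▸ hvi1)
      -- every part of ω is a face
      have partsA : ∀ i, partF Ks ω i ∈ Ks i := by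
        intro i
        obtain ⟨j, v, hvω, hvj, hji⟩ :
            ∃ j v, v ∈ ω ∧ v ∈ suppSC (Ks j) ∧ j ≠ i := by
          by_cases h : i = i0
          · exact ⟨i1, v1, hv1, hvi1, h ▸ hii⟩
          · exact ⟨i0, v0, hv0, hvi0, fun hh => h hh.symm⟩
        have hvnotsupp : v ∉ suppSC (Ks i) :=
          fun hvi => hji (supp_unique hdisj hvj hvi)
        have hterase : ω.erase v ⊂ ω := Finset.erase_ssubset hvω
        have htmem := hmin _ hterase
        have hsub' : (↑(ω.erase v) : Set V) ⊆ ⋃ i, suppSC (Ks i) :=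
          fun w hw => hsupp (Finset.erase_subset _ _ hw)
        have := ((memiff hsub').1 htmem).1 i
        rwa [partF_erase_of_not_mem_supp hvnotsupp] at this
      have typenot : typeF Ks ω ∉ K :=
        fun h => hnot ((memiff hsupp).2 ⟨partsA, h⟩)
      -- each nonempty part is a singleton
      have hsingle : ∀ i ∈ typeF Ks ω, ∀ v ∈ partF Ks ω i, partF Ks ω i = {v} := by
        intro i hiT v hv
        apply Finset.eq_singleton_iff_unique_mem.2 ⟨hv, ?_⟩
        intro w hw
        by_contra hwv
        -- erase v, the type stays the same, contradicting typenot
        have hvω : v ∈ ω := partF_subset hv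
        have hterase : ω.erase v ⊂ ω := Finset.erase_ssubset hvω
        have htmem := hmin _ hterase
        have hsub' : (↑(ω.erase v) : Set V) ⊆ ⋃ i, suppSC (Ks i) :=
          fun w hw => hsupp (Finset.erase_subset _ _ hw)
        have htype := ((memiff hsub').1 htmem).2
        have : typeF Ks (ω.erase v) = typeF Ks ω := by
          ext j
          rw [mem_typeF, mem_typeF]
          by_cases hj : j = i
          · subst hj
            rw [partF_erase]
            constructor
            · intro _; exact mem_typeF.1 hiT
            · intro _
              exact Finset.ne_empty_of_mem (Finset.mem_erase.2 ⟨hwv, hw⟩)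
          · rw [partF_erase_of_not_mem_supp
              (fun hvj => hj (supp_unique hdisj hvj (mem_partF.1 hv).2))]
        rw [this] at htype
        exact typenot htype
      -- choose the vertex of each part
      have hex : ∀ i, ∃ v : V, i ∈ typeF Ks ω → partF Ks ω i = {v} := by
        intro i
        by_cases hi : i ∈ typeF Ks ω
        · obtain ⟨v, hv⟩ := Finset.nonempty_iff_ne_empty.2 (mem_typeF.1 hi)
          exact ⟨v, fun _ => hsingle i hi v hv⟩
        · exact ⟨v0, fun h => absurd h hi⟩
      choose f hf using hex
      have hfmem : ∀ i ∈ typeF Ks ω, f i ∈ partF Ks ω i := by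
        intro i hi; rw [hf i hi]; exact Finset.mem_singleton_self _
      have hωim : ω = (typeF Ks ω).image f := by
        ext v
        constructor
        · intro hv
          obtain ⟨i, hvi⟩ := Set.mem_iUnion.1 (hsupp hv)
          have hvp : v ∈ partF Ks ω i := mem_partF.2 ⟨hv, hvi⟩
          have hiT : i ∈ typeF Ks ω := mem_typeF.2 (Finset.ne_empty_of_mem hvp)
          refine Finset.mem_image.2 ⟨i, hiT, ?_⟩
          have := hf i hiT ▸ hvp
          exact (Finset.mem_singleton.1 this).symm
        · intro hv
          obtain ⟨i, hiT, rfl⟩ := Finset.mem_image.1 hv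
          exact partF_subset (hfmem i hiT)
      have hfsupp : ∀ i ∈ typeF Ks ω, f i ∈ suppSC (Ks i) :=
        fun i hi => (mem_partF.1 (hfmem i hi)).2
      refine Or.inr ⟨typeF Ks ω, ⟨fun _ _ => trivial, typenot, ?_⟩,
        f, fun i hi => hvert (f i) (partF_subset (hfmem i hi)) i (hfsupp i hi), hωim⟩
      -- proper subsets of the type are faces of K
      intro τ hτ
      have hfτ : ∀ i ∈ τ, f i ∈ suppSC (Ks i) := fun i hi => hfsupp i (hτ.1 hi)
      have htsub : τ.image f ⊆ ω := by
        rw [hωim]; exact Finset.image_subset_image hτ.1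
      obtain ⟨j, hjT, hjτ⟩ := Finset.exists_of_ssubset hτ
      have htss : τ.image f ⊂ ω := by
        refine Finset.ssubset_iff_of_subset htsub |>.2 ⟨f j, ?_, ?_⟩
        · rw [hωim]; exact Finset.mem_image.2 ⟨j, hjT, rfl⟩
        · intro h
          obtain ⟨i, hiτ, hif⟩ := Finset.mem_image.1 h
          exact hjτ (supp_unique hdisj (hif ▸ hfτ i hiτ) (hfsupp j hjT) ▸ hiτ)
      have htmem := hmin _ htss
      have hsub' : (↑(τ.image f) : Set V) ⊆ ⋃ i, suppSC (Ks i) :=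
        fun w hw => hsupp (htsub hw)
      have := ((memiff hsub').1 htmem).2
      rwa [typeF_image hdisj hfτ] at this
  · rintro (⟨i, hsub, hnot, hmin⟩ | ⟨σ, ⟨-, hσnot, hσmin⟩, f, hf, rfl⟩)
    · -- MMF of a factor
      have hsuppi : (↑ω : Set V) ⊆ suppSC (Ks i) :=
        fun v hv => vert_subset_supp (hsub hv)
      have hsupp : (↑ω : Set V) ⊆ ⋃ j, suppSC (Ks j) :=
        fun v hv => Set.mem_iUnion.2 ⟨i, hsuppi hv⟩
      refine ⟨fun v hv => Set.mem_iUnion.2 ⟨i, hsub hv⟩, ?_, ?_⟩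
      · intro h
        have := ((memiff hsupp).1 h).1 i
        rw [(partF_of_subset_supp hdisj hsuppi).1] at this
        exact hnot this
      · intro t ht
        have htmem := hmin t ht
        have htsupp : (↑t : Set V) ⊆ suppSC (Ks i) := fun v hv => hsuppi (ht.1 hv)
        obtain ⟨hpi, hpj⟩ := partF_of_subset_supp hdisj htsupp
        refine (memiff (fun v hv => Set.mem_iUnion.2 ⟨i, htsupp hv⟩)).2 ⟨?_, ?_⟩
        · intro j
          by_cases hj : j = i
          · subst hj; rw [hpi]; exact htmem
          · rw [hpj j hj]; exact h0 j
        · refine hK (hKv i) ?_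
          intro j hj
          by_contra hji
          simp only [Finset.mem_singleton] at hji
          exact mem_typeF.1 hj (hpj j hji)
    · -- image of an MMF of K
      have hfsupp : ∀ i ∈ σ, f i ∈ suppSC (Ks i) :=
        fun i hi => vert_subset_supp (hf i hi)
      have hsupp : (↑(σ.image f) : Set V) ⊆ ⋃ j, suppSC (Ks j) := by
        intro v hv
        obtain ⟨i, hi, rfl⟩ := Finset.mem_image.1 (by exact_mod_cast hv)
        exact Set.mem_iUnion.2 ⟨i, hfsupp i hi⟩
      refine ⟨?_, ?_, ?_⟩
      · intro v hv
        obtain ⟨i, hi, rfl⟩ := Finset.mem_image.1 (by exact_mod_cast hv)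
        exact Set.mem_iUnion.2 ⟨i, hf i hi⟩
      · intro h
        have := ((memiff hsupp).1 h).2
        rw [typeF_image hdisj hfsupp] at this
        exact hσnot this
      · intro t ht
        set τ : Finset (Fin m) := σ.filter (fun i => f i ∈ t) with hτdef
        have hτσ : τ ⊆ σ := Finset.filter_subset _ _
        have hfτ : ∀ i ∈ τ, f i ∈ suppSC (Ks i) := fun i hi => hfsupp i (hτσ hi)
        have htτ : t = τ.image f := by
          ext v
          constructor
          · intro hv
            obtain ⟨i, hi, rfl⟩ := Finset.mem_image.1 (ht.1 hv)
            exact Finset.mem_image.2 ⟨i, Finset.mem_filter.2 ⟨hi, hv⟩, rfl⟩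
          · intro hv
            obtain ⟨i, hi, rfl⟩ := Finset.mem_image.1 hv
            exact (Finset.mem_filter.1 hi).2
        have hτss : τ ⊂ σ := by
          refine ⟨hτσ, fun h => ?_⟩
          apply ht.2
          intro v hv
          obtain ⟨i, hi, rfl⟩ := Finset.mem_image.1 hv
          rw [htτ]
          exact Finset.mem_image.2 ⟨i, h hi, rfl⟩
        have hτK : τ ∈ K := hσmin τ hτss
        rw [htτ]
        refine (memiff (fun v hv => hsupp (by
          exact_mod_cast Finset.image_subset_image hτσ (by exact_mod_cast hv)))).2 ⟨?_, ?_⟩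
        · intro i
          rw [partF_image hdisj hfτ]
          by_cases hi : i ∈ τ
          · simpa [hi, vertSC] using hf i (hτσ hi)
          · simpa [hi] using h0 i
        · rwa [typeF_image hdisj hfτ]
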